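/- Profile of the mixed tensor: for an opponent game O and a player game P, profile[O ⊗ʳ P]_0 = 1 and, for all n ≥ 0, profile[O ⊗ʳ P]_{n+1} = Σ_{i=0}^{n} C(⌊n/2⌋, ⌊i/2⌋) · γ(i, n−i) · profile[O]_i · profile[P]_{n−i+1}, where γ(i,j) = 1 if i or j is zero or even and 0 otherwise. -/

import Mathlib

/-- Rose trees: the unlabeled shape of a game tree. -/
inductive RTree : Type where
  | node : List RTree → RTree

mutual
/-- An opponent game: a finite list of player games (its children). -/
inductive OGame : Type where
  | mk : List PGame → OGame
/-- A player game: a finite list of opponent games (its children). -/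
inductive PGame : Type where
  | mk : List OGame → PGame
end

mutual
/-- The dual of an opponent game. -/
def OGame.dual : OGame → PGame
  | .mk ps => .mk (ps.attach.map fun ⟨p, _⟩ => p.dual)
/-- The dual of a player game. -/
def PGame.dual : PGame → OGame
  | .mk os => .mk (os.attach.map fun ⟨o, _⟩ => o.dual)
end

mutual
/-- Strategy existence in an opponent game: a conjunction over children. -/
def OGame.strat : OGame → Bool
  | .mk ps => ps.attach.all fun ⟨p, _⟩ => p.strat
/-- Strategy existence in a player game: a disjunction over children. -/
def PGame.strat : PGame → Bool
  | .mk os => os.attach.any fun ⟨o, _⟩ => o.strat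
end

mutual
/-- Tensor of opponent games: `O ⊗ O' = (P_i ⊗ˡ O', O ⊗ʳ P'_k | …)`. -/
def otimes : OGame → OGame → OGame
  | .mk ps, .mk qs => .mk ((ps.attach.map fun ⟨p, _⟩ => oxl p (.mk qs)) ++
      (qs.attach.map fun ⟨q, _⟩ => oxr (.mk ps) q))
  termination_by o o' => sizeOf o + sizeOf o'
  decreasing_by
  · have := List.sizeOf_lt_of_mem ‹p ∈ ps›; simp_all; omega
  · have := List.sizeOf_lt_of_mem ‹q ∈ qs›; simp_all; omega
/-- Mixed tensor `O ⊗ʳ P = {O ⊗ O_j | j ∈ J}`. -/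
def oxr : OGame → PGame → PGame
  | o, .mk os => .mk (os.attach.map fun ⟨oj, _⟩ => otimes o oj)
  termination_by o p => sizeOf o + sizeOf p
  decreasing_by
  · have := List.sizeOf_lt_of_mem ‹oj ∈ os›; simp_all; omega
/-- Mixed tensor `P ⊗ˡ O = {O_j ⊗ O | j ∈ J}`. -/
def oxl : PGame → OGame → PGame
  | .mk os, o => .mk (os.attach.map fun ⟨oj, _⟩ => otimes oj o)
  termination_by p o => sizeOf p + sizeOf o
  decreasing_by
  · have := List.sizeOf_lt_of_mem ‹oj ∈ os›; simp_all; omega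
end

mutual
/-- Par of player games: `P ⅋ P' = {O_j ⅋ˡ P', P ⅋ʳ O'_k | …}`. -/
def parr : PGame → PGame → PGame
  | .mk os, .mk qs => .mk ((os.attach.map fun ⟨o, _⟩ => parrOP o (.mk qs)) ++
      (qs.attach.map fun ⟨q, _⟩ => parrPO (.mk os) q))
  termination_by p p' => sizeOf p + sizeOf p'
  decreasing_by
  · have := List.sizeOf_lt_of_mem ‹o ∈ os›; simp_all; omega
  · have := List.sizeOf_lt_of_mem ‹q ∈ qs›; simp_all; omega
/-- Mixed par `P ⅋ʳ O = (P ⅋ P_i | i ∈ I)`. -/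
def parrPO : PGame → OGame → OGame
  | p, .mk ps => .mk (ps.attach.map fun ⟨pi, _⟩ => parr p pi)
  termination_by p o => sizeOf p + sizeOf o
  decreasing_by
  · have := List.sizeOf_lt_of_mem ‹pi ∈ ps›; simp_all; omega
/-- Mixed par `O ⅋ˡ P = (P_i ⅋ P | i ∈ I)`. -/
def parrOP : OGame → PGame → OGame
  | .mk ps, p => .mk (ps.attach.map fun ⟨pi, _⟩ => parr pi p)
  termination_by o p => sizeOf o + sizeOf p
  decreasing_by
  · have := List.sizeOf_lt_of_mem ‹pi ∈ ps›; simp_all; omega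
end

mutual
/-- The exponential `!O`: `!() = ()` and `!O = ⊗_{i∈I} (b_i : !'P_i)` for `I ≠ ∅`. -/
def bang : OGame → OGame
  | .mk [] => .mk []
  | .mk (p :: ps) =>
      (ps.attach.map fun ⟨q, _⟩ => OGame.mk [bang' q]).foldl otimes (OGame.mk [bang' p])
/-- The auxiliary exponential `!'{a_j : O_j} = {a_j : !O_j}`. -/
def bang' : PGame → PGame
  | .mk os => .mk (os.attach.map fun ⟨o, _⟩ => bang o)
end

mutual
/-- Underlying unlabeled tree of an opponent game. -/
def OGame.toTree : OGame → RTree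
  | .mk ps => .node (ps.attach.map fun ⟨p, _⟩ => p.toTree)
/-- Underlying unlabeled tree of a player game. -/
def PGame.toTree : PGame → RTree
  | .mk os => .node (os.attach.map fun ⟨o, _⟩ => o.toTree)
end

/-- Number of nodes (including the root). -/
def RTree.nodes : RTree → ℕ
  | .node cs => 1 + (cs.attach.map fun ⟨c, _⟩ => c.nodes).sum

/-- Number of parent-child edges. -/
def RTree.edges : RTree → ℕ
  | .node cs => cs.length + (cs.attach.map fun ⟨c, _⟩ => c.edges).sum

/-- Number of leaves. -/
def RTree.leaves : RTree → ℕ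
  | .node [] => 1
  | .node cs => (cs.attach.map fun ⟨c, _⟩ => c.leaves).sum

/-- Uniform size: `u[leaf] = 0`, `u[node with n children] = (n-1) + Σ u[child]`. -/
def RTree.usize : RTree → ℕ
  | .node [] => 0
  | .node cs => (cs.length - 1) + (cs.attach.map fun ⟨c, _⟩ => c.usize).sum

/-- Depth: leaves have depth 0. -/
def RTree.depth : RTree → ℕ
  | .node cs => (cs.attach.map fun ⟨c, _⟩ => c.depth + 1).foldr max 0

/-- `profile t k` is the number of nodes of `t` at depth `k`. -/
def RTree.profile : RTree → ℕ → ℕ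
  | _, 0 => 1
  | .node cs, k + 1 => (cs.attach.map fun ⟨c, _⟩ => c.profile k).sum

mutual
/-- Number of player nodes of an opponent game. -/
def OGame.pnodes : OGame → ℕ
  | .mk ps => (ps.attach.map fun ⟨p, _⟩ => p.pnodes).sum
/-- Number of player nodes of a player game (the root counts). -/
def PGame.pnodes : PGame → ℕ
  | .mk os => 1 + (os.attach.map fun ⟨o, _⟩ => o.pnodes).sum
end

mutual
/-- Number of edges leaving opponent nodes, for an opponent game. -/
def OGame.eo : OGame → ℕ
  | .mk ps => ps.length + (ps.attach.map fun ⟨p, _⟩ => p.eo).sum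
/-- Number of edges leaving opponent nodes, for a player game. -/
def PGame.eo : PGame → ℕ
  | .mk os => (os.attach.map fun ⟨o, _⟩ => o.eo).sum
end

mutual
/-- Number of edges leaving player nodes, for an opponent game. -/
def OGame.ep : OGame → ℕ
  | .mk ps => (ps.attach.map fun ⟨p, _⟩ => p.ep).sum
/-- Number of edges leaving player nodes, for a player game. -/
def PGame.ep : PGame → ℕ
  | .mk os => os.length + (os.attach.map fun ⟨o, _⟩ => o.ep).sum
end

/-- `γ(i,j) = 1` if `i` or `j` is zero or even, else `0`. -/
def gammaCoef (i j : ℕ) : ℕ :=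
  if i = 0 ∨ j = 0 ∨ i % 2 = 0 ∨ j % 2 = 0 then 1 else 0

mutual
/-- The single-branch player chain `L_n`. -/
def Lp : ℕ → PGame
  | 0 => .mk []
  | n + 1 => .mk [Lo n]
/-- The single-branch opponent chain `L'_n`. -/
def Lo : ℕ → OGame
  | 0 => .mk []
  | n + 1 => .mk [Lp n]
end

lemma profile_zero (t : RTree) : t.profile 0 = 1 := by
  cases t with | node cs => rw [RTree.profile]
lemma profile_node (cs : List RTree) (k : ℕ) :
    (RTree.node cs).profile (k+1) = (cs.map (fun c => c.profile k)).sum := by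
  rw [RTree.profile]
  simp

lemma toTree_O (ps : List PGame) : (OGame.mk ps).toTree = .node (ps.map PGame.toTree) := by
  rw [OGame.toTree]; simp

lemma toTree_P (os : List OGame) : (PGame.mk os).toTree = .node (os.map OGame.toTree) := by
  rw [PGame.toTree]; simp

lemma oxr_eq (O : OGame) (os : List OGame) : oxr O (.mk os) = .mk (os.map (otimes O)) := by
  rw [oxr]; simp

lemma oxl_eq (os : List OGame) (O : OGame) : oxl (.mk os) O = .mk (os.map (otimes · O)) := by
  rw [oxl]; simp

lemma otimes_eq (ps : List PGame) (qs : List PGame) :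
    otimes (.mk ps) (.mk qs) =
      .mk (ps.map (fun p => oxl p (.mk qs)) ++ qs.map (fun q => oxr (.mk ps) q)) := by
  rw [otimes]; simp

lemma profO_succ (ps : List PGame) (k : ℕ) :
    (OGame.mk ps).toTree.profile (k+1) = (ps.map (fun p => p.toTree.profile k)).sum := by
  rw [toTree_O, profile_node, List.map_map]; rfl

lemma profP_succ (os : List OGame) (k : ℕ) :
    (PGame.mk os).toTree.profile (k+1) = (os.map (fun o => o.toTree.profile k)).sum := by
  rw [toTree_P, profile_node, List.map_map]; rfl

lemma list_sum_comm {α : Type*} (l : List α) (s : Finset ℕ) (f : ℕ → α → ℕ) :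
    (l.map fun x => ∑ i ∈ s, f i x).sum = ∑ i ∈ s, (l.map (f i)).sum := by
  induction l with
  | nil => simp
  | cons a t ih => simp [ih, Finset.sum_add_distrib]

lemma gamma_eq (i j : ℕ) : gammaCoef i j = if i % 2 = 0 ∨ j % 2 = 0 then 1 else 0 := by
  rw [gammaCoef]; split <;> split <;> first | rfl | omega

def coef (n i : ℕ) : ℕ := Nat.choose (n/2) (i/2) * gammaCoef i (n-i)

lemma pascal' (μ A : ℕ) :
    Nat.choose (μ+1) A = (if A ≤ μ then Nat.choose μ A else 0) + (if 1 ≤ A then Nat.choose μ (A-1) else 0) := by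
  match A with
  | 0 => simp
  | B+1 =>
    rw [Nat.choose_succ_succ]
    by_cases hB : B + 1 ≤ μ
    · simp [hB, Nat.add_comm]
    · have h0 : Nat.choose μ (B+1) = 0 := Nat.choose_eq_zero_of_lt (by omega)
      simp [hB, h0]

lemma key (m a : ℕ) (ha : a ≤ m + 2) :
    coef (m+2) a = (if a ≤ m then coef m a else 0) + (if 2 ≤ a then coef m (a-2) else 0) := by
  have hm := Nat.mod_two_eq_zero_or_one m
  have hA := Nat.mod_two_eq_zero_or_one a
  simp only [coef, gamma_eq]
  by_cases hz : a % 2 = 1 ∧ m % 2 = 0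
  · have n1 : ¬(a % 2 = 0 ∨ (m+2-a) % 2 = 0) := by omega
    rw [if_neg n1, mul_zero]
    have z1 : (if a ≤ m then (m/2).choose (a/2) * (if a % 2 = 0 ∨ (m-a) % 2 = 0 then 1 else 0) else 0) = 0 := by
      by_cases hm' : a ≤ m
      · have n2 : ¬(a % 2 = 0 ∨ (m-a) % 2 = 0) := by omega
        simp [hm', n2]
      · simp [hm']
    have z2 : (if 2 ≤ a then (m/2).choose ((a-2)/2) * (if (a-2) % 2 = 0 ∨ (m-(a-2)) % 2 = 0 then 1 else 0) else 0) = 0 := by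
      by_cases h2 : 2 ≤ a
      · have n3 : ¬((a-2) % 2 = 0 ∨ (m-(a-2)) % 2 = 0) := by omega
        simp [h2, n3]
      · simp [h2]
    rw [z1, z2]
    rfl
  · -- non-degenerate: all gammas are 1
    have g1 : (a % 2 = 0 ∨ (m+2-a) % 2 = 0) := by omega
    have g2 : (a % 2 = 0 ∨ (m-a) % 2 = 0) := by omega
    have g3 : ((a-2) % 2 = 0 ∨ (m-(a-2)) % 2 = 0) := by omega
    have e1 : (m+2)/2 = m/2 + 1 := by omega
    rw [if_pos g1, if_pos g2, if_pos g3, e1, mul_one, mul_one, mul_one,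
      pascal' (m/2) (a/2)]
    by_cases h2 : 2 ≤ a
    · have e2 : (a-2)/2 = a/2 - 1 := by omega
      rw [e2]
      by_cases h3 : a ≤ m
      · rw [if_pos h3, if_pos h2, if_pos (show a/2 ≤ m/2 by omega),
          if_pos (show 1 ≤ a/2 by omega)]
      · rw [if_neg h3, if_pos h2, if_neg (show ¬ a/2 ≤ m/2 by omega),
          if_pos (show 1 ≤ a/2 by omega)]
    · have e3 : a/2 = 0 := by omega
      have e4 : a ≤ m := by omega
      simp [h2, e3, e4]
lemma oxr_prof (n : ℕ)
    (hT : ∀ O O' : OGame, (otimes O O').toTree.profile n =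
      ∑ i ∈ Finset.range (n+1), coef n i * O.toTree.profile i * O'.toTree.profile (n-i)) :
    ∀ (O : OGame) (P : PGame), (oxr O P).toTree.profile (n+1) =
      ∑ i ∈ Finset.range (n+1),
        coef n i * O.toTree.profile i * P.toTree.profile (n-i+1) := by
  rintro O ⟨os⟩
  rw [oxr_eq, profP_succ, List.map_map]
  simp only [Function.comp_def, hT]
  rw [list_sum_comm]
  refine Finset.sum_congr rfl fun i _ => ?_
  rw [List.sum_map_mul_left os (fun o => o.toTree.profile (n-i))
    (coef n i * O.toTree.profile i), mul_assoc, ← profP_succ]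
  ring

lemma oxl_prof (n : ℕ)
    (hT : ∀ O O' : OGame, (otimes O O').toTree.profile n =
      ∑ i ∈ Finset.range (n+1), coef n i * O.toTree.profile i * O'.toTree.profile (n-i)) :
    ∀ (P : PGame) (O : OGame), (oxl P O).toTree.profile (n+1) =
      ∑ i ∈ Finset.range (n+1),
        coef n i * P.toTree.profile (i+1) * O.toTree.profile (n-i) := by
  rintro ⟨os⟩ O
  rw [oxl_eq, profP_succ, List.map_map]
  simp only [Function.comp_def, hT]
  rw [list_sum_comm]
  refine Finset.sum_congr rfl fun i _ => ?_
  have : ∀ o : OGame, coef n i * o.toTree.profile i * O.toTree.profile (n-i)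
      = (coef n i * O.toTree.profile (n-i)) * o.toTree.profile i := by intro o; ring
  simp only [this]
  rw [List.sum_map_mul_left os (fun o => o.toTree.profile i)
    (coef n i * O.toTree.profile (n-i)), ← profP_succ]
  ring

theorem T_all : ∀ n, ∀ O O' : OGame, (otimes O O').toTree.profile n =
    ∑ i ∈ Finset.range (n+1), coef n i * O.toTree.profile i * O'.toTree.profile (n-i) := by
  intro n
  induction n using Nat.strong_induction_on with
  | _ n ih =>
    match n with
    | 0 =>
      intro O O'
      simp [profile_zero, coef, gammaCoef]
    | 1 =>
      rintro ⟨ps⟩ ⟨qs⟩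
      rw [otimes_eq, profO_succ, List.map_append, List.sum_append, List.map_map, List.map_map,
        Finset.sum_range_succ, Finset.sum_range_succ, Finset.sum_range_zero,
        profO_succ ps 0, profO_succ qs 0]
      simp [Function.comp_def, profile_zero, coef, gammaCoef, mul_comm]
      omega
    | (m+2) =>
      rintro ⟨ps⟩ ⟨qs⟩
      have hT := ih m (by omega)
      have hR := oxr_prof m hT
      have hL := oxl_prof m hT
      rw [otimes_eq, profO_succ, List.map_append, List.sum_append, List.map_map, List.map_map]
      simp only [Function.comp_def, hR, hL]
      rw [list_sum_comm, list_sum_comm]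
      -- pull constants out of the list sums
      have e1 : ∀ i, ((ps.map fun p => coef m i * p.toTree.profile (i+1) *
          (OGame.mk qs).toTree.profile (m-i))).sum =
          coef m i * (OGame.mk ps).toTree.profile (i+2) * (OGame.mk qs).toTree.profile (m-i) := by
        intro i
        have : ∀ p : PGame, coef m i * p.toTree.profile (i+1) * (OGame.mk qs).toTree.profile (m-i)
            = (coef m i * (OGame.mk qs).toTree.profile (m-i)) * p.toTree.profile (i+1) := by
          intro p; ring
        simp only [this]
        rw [List.sum_map_mul_left ps (fun p => p.toTree.profile (i+1))
          (coef m i * (OGame.mk qs).toTree.profile (m-i)), ← profO_succ]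
        ring
      have e2 : ∀ i, ((qs.map fun q => coef m i * (OGame.mk ps).toTree.profile i *
          q.toTree.profile (m-i+1))).sum =
          coef m i * (OGame.mk ps).toTree.profile i * (OGame.mk qs).toTree.profile (m-i+2) := by
        intro i
        rw [List.sum_map_mul_left qs (fun q => q.toTree.profile (m-i+1))
          (coef m i * (OGame.mk ps).toTree.profile i), mul_assoc, ← profO_succ]
        ring
      simp only [e1, e2]
      -- now the combinatorial rearrangement
      set f := fun a => (OGame.mk ps).toTree.profile a with hf
      set g := fun a => (OGame.mk qs).toTree.profile a with hg
      have key' : ∀ a ∈ Finset.range (m+2+1), coef (m+2) a * f a * g (m+2-a) =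
          (if a ≤ m then coef m a else 0) * f a * g (m+2-a) +
          (if 2 ≤ a then coef m (a-2) else 0) * f a * g (m+2-a) := by
        intro a ha
        rw [key m a (by simp at ha; omega), add_mul, add_mul]
      rw [Finset.sum_congr rfl key', Finset.sum_add_distrib]
      have s1 : (∑ a ∈ Finset.range (m+3),
          (if a ≤ m then coef m a else 0) * f a * g (m+2-a)) =
          ∑ i ∈ Finset.range (m+1), coef m i * f i * g (m-i+2) := by
        rw [show m+3 = (m+2)+1 from rfl, Finset.sum_range_succ,
          show m+2 = (m+1)+1 from rfl, Finset.sum_range_succ]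
        rw [if_neg (show ¬ (m+2 ≤ m) by omega), if_neg (show ¬ (m+1 ≤ m) by omega)]
        simp only [zero_mul, add_zero]
        refine Finset.sum_congr rfl fun a ha => ?_
        simp only [Finset.mem_range] at ha
        rw [if_pos (show a ≤ m by omega), show m+2-a = m-a+2 from by omega]
      have s2 : (∑ a ∈ Finset.range (m+3),
          (if 2 ≤ a then coef m (a-2) else 0) * f a * g (m+2-a)) =
          ∑ i ∈ Finset.range (m+1), coef m i * f (i+2) * g (m-i) := by
        rw [show m+3 = (m+2)+1 from rfl, Finset.sum_range_succ',
          show m+2 = (m+1)+1 from rfl, Finset.sum_range_succ']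
        rw [if_neg (show ¬ (2 ≤ 0) by omega), if_neg (show ¬ (2 ≤ 0+1) by omega)]
        simp only [zero_mul, add_zero]
        refine Finset.sum_congr rfl fun a ha => ?_
        rw [if_pos (show 2 ≤ a+1+1 by omega),
          show a+1+1-2 = a from by omega,
          show m+2-(a+1+1) = m-a from by omega,
          show a+1+1 = a+2 from by omega]
      rw [s1, s2, add_comm]
/-- profile of the mixed tensor O ⊗ʳ P. -/
theorem profile_oxr (O : OGame) (P : PGame) :
    (oxr O P).toTree.profile 0 = 1 ∧
    ∀ n : ℕ,
      (oxr O P).toTree.profile (n + 1) =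
        ∑ i ∈ Finset.range (n + 1),
          Nat.choose (n / 2) (i / 2) * gammaCoef i (n - i) *
            O.toTree.profile i * P.toTree.profile (n - i + 1) := by
  refine ⟨profile_zero _, fun n => ?_⟩
  rw [oxr_prof n (T_all n) O P]
  exact Finset.sum_congr rfl fun i _ => by rw [coef]
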